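/- Let P and P̃ be monic real polynomials of degree d, each splitting over ℝ with largest roots λ₁ and λ̃₁ respectively, and suppose |P(λ) − P̃(λ)| ≤ Cε for all λ in an interval containing all roots of both polynomials. Then |λ₁ − λ̃₁| ≤ (Cε)^{1/d}. -/

import Mathlib

lemma aux5 (d : ℕ) (hd : 0 < d) (L C ε : ℝ) (hCε : 0 < C * ε)
    (r rt : Fin d → ℝ) (hr : ∀ i, |r i| ≤ L)
    (hmrt : Antitone rt)
    (hclose : ∀ x : ℝ, |x| ≤ L →
      |(∏ i : Fin d, (x - r i)) - ∏ i : Fin d, (x - rt i)| ≤ C * ε)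
    (hle : rt ⟨0, hd⟩ ≤ r ⟨0, hd⟩) :
    r ⟨0, hd⟩ - rt ⟨0, hd⟩ ≤ (C * ε) ^ ((1 : ℝ) / d) := by
  set x := r ⟨0, hd⟩ with hx
  set a := x - rt ⟨0, hd⟩ with ha
  have ha0 : 0 ≤ a := sub_nonneg.2 hle
  have hP : (∏ i : Fin d, (x - r i)) = 0 :=
    Finset.prod_eq_zero (Finset.mem_univ ⟨0, hd⟩) (by simp [hx])
  have hfac : ∀ i : Fin d, a ≤ x - rt i := fun i =>
    sub_le_sub_left (hmrt (Fin.mk_le_of_le_val (Nat.zero_le _))) x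
  have hpow : a ^ d ≤ ∏ i : Fin d, (x - rt i) := by
    calc a ^ d = ∏ _i : Fin d, a := by simp
    _ ≤ ∏ i : Fin d, (x - rt i) :=
      Finset.prod_le_prod (fun i _ => ha0) (fun i _ => hfac i)
  have hC' := hclose x (hr _)
  rw [hP] at hC'
  have h1 : a ^ d ≤ C * ε := hpow.trans (le_of_abs_le (by rwa [abs_sub_comm, sub_zero] at hC'))
  have hdne : (d : ℝ) ≠ 0 := Nat.cast_ne_zero.2 hd.ne'
  calc a = (a ^ d) ^ ((1 : ℝ) / d) := by
        rw [← Real.rpow_natCast a d, ← Real.rpow_mul ha0, mul_one_div, div_self hdne,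
          Real.rpow_one]
    _ ≤ (C * ε) ^ ((1 : ℝ) / d) :=
        Real.rpow_le_rpow (pow_nonneg ha0 d) h1 (by positivity)

/-- If two monic degree-`d` real polynomials split with all roots in `[-L, L]` and are uniformly
`Cε`-close on `[-L, L]`, then their largest roots differ by at most `(Cε)^{1/d}`. -/
theorem stmt5 (d : ℕ) (hd : 0 < d) (L C ε : ℝ) (hC : 0 < C) (hε : 0 < ε)
    (r rt : Fin d → ℝ) (hr : ∀ i, |r i| ≤ L) (hrt : ∀ i, |rt i| ≤ L)
    (hmr : Antitone r) (hmrt : Antitone rt)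
    (hclose : ∀ x : ℝ, |x| ≤ L →
      |(∏ i : Fin d, (x - r i)) - ∏ i : Fin d, (x - rt i)| ≤ C * ε) :
    |r ⟨0, hd⟩ - rt ⟨0, hd⟩| ≤ (C * ε) ^ ((1 : ℝ) / d) := by
  have hCε : 0 < C * ε := mul_pos hC hε
  rcases le_total (rt ⟨0, hd⟩) (r ⟨0, hd⟩) with h | h
  · rw [abs_of_nonneg (sub_nonneg.2 h)]
    exact aux5 d hd L C ε hCε r rt hr hmrt hclose h
  · rw [abs_sub_comm, abs_of_nonneg (sub_nonneg.2 h)]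
    exact aux5 d hd L C ε hCε rt r hrt hmr
      (fun x hx => by rw [abs_sub_comm]; exact hclose x hx) h
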